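/- Let 0 < c_1 < c_2. Then lim_{r ↓ 1} (2πi)^{-1} ∮_{|ξ|=1} log(√c_2 + √c_1 ξ) ( ξ/(ξ² − r^{-2}) − 1/ξ ) dξ = (1/2) log(1 − c_1/c_2), where the circle is traversed once counterclockwise and log denotes the principal branch of the complex logarithm (well defined since Re(√c_2 + √c_1 ξ) ≥ √c_2 − √c_1 > 0 on the unit circle). -/

import Mathlib

open MeasureTheory Filter Complex

noncomputable section

open Metric in
set_option maxHeartbeats 800000 in
/-- the residue computation ℰ₁(f₃):
`lim_{r↓1} (2πi)⁻¹ ∮_{|ξ|=1} log(√c₂ + √c₁ ξ)(ξ/(ξ² − r⁻²) − 1/ξ) dξ = ½ log(1 − c₁/c₂)`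
for `0 < c₁ < c₂`, with the principal branch of the complex logarithm. -/
theorem stmt_13 (c1 c2 : ℝ) (h1 : 0 < c1) (h12 : c1 < c2) :
    Tendsto
      (fun r : ℝ =>
        (2 * (Real.pi : ℂ) * Complex.I)⁻¹ *
          ∮ ξ in C((0 : ℂ), 1),
            Complex.log ((Real.sqrt c2 : ℂ) + (Real.sqrt c1 : ℂ) * ξ) *
              (ξ / (ξ ^ 2 - ((r : ℂ) ^ 2)⁻¹) - ξ⁻¹))
      (nhdsWithin (1 : ℝ) (Set.Ioi 1))
      (nhds ((Real.log (1 - c1 / c2) / 2 : ℝ) : ℂ)) := by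
  have h2 : 0 < c2 := h1.trans h12
  set s1 := Real.sqrt c1 with hs1def
  set s2 := Real.sqrt c2 with hs2def
  have hs1 : 0 < s1 := Real.sqrt_pos.2 h1
  have hs2 : 0 < s2 := Real.sqrt_pos.2 h2
  have hs12 : s1 < s2 := Real.sqrt_lt_sqrt h1.le h12
  set g : ℂ → ℂ := fun ξ => Complex.log ((s2 : ℂ) + (s1 : ℂ) * ξ) with hgdef
  -- g is DiffContOnCl on the unit ball
  have hgd : DiffContOnCl ℂ g (ball (0 : ℂ) 1) := by
    have : DifferentiableOn ℂ g (closedBall (0 : ℂ) 1) := by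
      intro ξ hξ
      have hξ1 : ‖ξ‖ ≤ 1 := by
        simpa [Complex.dist_eq] using mem_closedBall.1 hξ
      have hre : 0 < ((s2 : ℂ) + (s1 : ℂ) * ξ).re := by
        have : |ξ.re| ≤ 1 := (Complex.abs_re_le_norm ξ).trans hξ1
        have h1' : -1 ≤ ξ.re := by linarith [abs_le.1 this |>.1]
        simp only [Complex.add_re, Complex.ofReal_re, Complex.mul_re, Complex.ofReal_im]
        nlinarith
      have hslit : (s2 : ℂ) + (s1 : ℂ) * ξ ∈ Complex.slitPlane := Or.inl hre
      exact ((Complex.differentiableAt_log hslit).comp (f := fun ξ : ℂ => (s2 : ℂ) + (s1 : ℂ) * ξ) ξ (by fun_prop)).differentiableWithinAt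
    exact (this.mono (by rw [closure_ball (0:ℂ) one_ne_zero])).diffContOnCl
  -- the limit function
  have key : ∀ r : ℝ, r ∈ Set.Ioi (1:ℝ) →
      (2 * (Real.pi : ℂ) * Complex.I)⁻¹ *
          (∮ ξ in C((0 : ℂ), 1), g ξ * (ξ / (ξ ^ 2 - ((r : ℂ) ^ 2)⁻¹) - ξ⁻¹))
        = 2⁻¹ * g ((r:ℂ)⁻¹) + 2⁻¹ * g (-(r:ℂ)⁻¹) - g 0 := by
    intro r hr
    have hr1 : (1:ℝ) < r := hr
    set a : ℂ := (r : ℂ)⁻¹ with hadef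
    have haabs : ‖a‖ = r⁻¹ := by
      simp [hadef, abs_of_pos (by linarith : (0:ℝ) < r)]
    have halt : ‖a‖ < 1 := by
      rw [haabs]; rw [inv_lt_one_iff₀]; right; exact hr1
    have hmem : a ∈ ball (0:ℂ) 1 := by simpa [Complex.dist_eq] using halt
    have hmem' : -a ∈ ball (0:ℂ) 1 := by simpa [Complex.dist_eq] using halt
    have hmem0 : (0:ℂ) ∈ ball (0:ℂ) 1 := by simp
    -- Cauchy
    have I1 := hgd.circleIntegral_sub_inv_smul hmem
    have I2 := hgd.circleIntegral_sub_inv_smul hmem'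
    have I0 := hgd.circleIntegral_sub_inv_smul hmem0
    -- integrability
    have hcont : ∀ w : ℂ, ‖w‖ < 1 →
        ContinuousOn (fun ξ => (ξ - w)⁻¹ • g ξ) (sphere (0:ℂ) 1) := by
      intro w hw
      refine ContinuousOn.smul (?_ : ContinuousOn (fun ξ : ℂ => (ξ - w)⁻¹) (sphere (0:ℂ) 1)) (hgd.continuousOn_ball.mono sphere_subset_closedBall)
      apply ContinuousOn.inv₀ (by fun_prop)
      intro ξ hξ
      have : ‖ξ‖ = 1 := by simpa [Complex.dist_eq] using hξ
      intro h
      rw [sub_eq_zero] at h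
      rw [h] at this; exact absurd this (by linarith)
    have hca := hcont a halt
    have hca' := hcont (-a) (by simpa using halt)
    have hc0 := hcont 0 (by simp)
    have int1 : CircleIntegrable (fun ξ => (2⁻¹:ℂ) • ((ξ - a)⁻¹ • g ξ)) 0 1 :=
      (show ContinuousOn (fun ξ => (2⁻¹:ℂ) • ((ξ - a)⁻¹ • g ξ)) (sphere (0:ℂ) 1) from hca.const_smul (2⁻¹:ℂ)).circleIntegrable zero_le_one
    have int2 : CircleIntegrable (fun ξ => (2⁻¹:ℂ) • ((ξ - (-a))⁻¹ • g ξ)) 0 1 :=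
      (show ContinuousOn (fun ξ => (2⁻¹:ℂ) • ((ξ - (-a))⁻¹ • g ξ)) (sphere (0:ℂ) 1) from hca'.const_smul (2⁻¹:ℂ)).circleIntegrable zero_le_one
    have int0 : CircleIntegrable (fun ξ => (ξ - 0)⁻¹ • g ξ) 0 1 :=
      hc0.circleIntegrable zero_le_one
    have intsub : CircleIntegrable
        (fun ξ => (ξ - 0)⁻¹ • g ξ - (2⁻¹:ℂ) • ((ξ - (-a))⁻¹ • g ξ)) 0 1 :=
      (show ContinuousOn (fun ξ => (ξ - 0)⁻¹ • g ξ - (2⁻¹:ℂ) • ((ξ - (-a))⁻¹ • g ξ)) (sphere (0:ℂ) 1) from hc0.sub (hca'.const_smul (2⁻¹:ℂ))).circleIntegrable zero_le_one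
    -- rewrite integrand on sphere
    have heq : Set.EqOn (fun ξ => g ξ * (ξ / (ξ ^ 2 - ((r : ℂ) ^ 2)⁻¹) - ξ⁻¹))
        (fun ξ => (2⁻¹ : ℂ) • ((ξ - a)⁻¹ • g ξ) -
          ((ξ - 0)⁻¹ • g ξ - (2⁻¹ : ℂ) • ((ξ - (-a))⁻¹ • g ξ))) (sphere (0:ℂ) 1) := by
      intro ξ hξ
      have habs : ‖ξ‖ = 1 := by simpa [Complex.dist_eq] using hξ
      have h0 : ξ ≠ 0 := by intro h; rw [h] at habs; simp at habs
      have hne1 : ξ - a ≠ 0 := by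
        intro h; rw [sub_eq_zero] at h; rw [h] at habs; rw [haabs] at habs
        exact absurd habs (by intro hh; nlinarith [hh])
      have hne2 : ξ + a ≠ 0 := by
        intro h
        have : ξ = -a := by linear_combination h
        rw [this] at habs; simp [haabs] at habs; nlinarith [habs]
      have hasq : ((r : ℂ) ^ 2)⁻¹ = a ^ 2 := by rw [hadef, inv_pow]
      have hprod : ξ ^ 2 - a ^ 2 ≠ 0 := by
        have h : ξ ^ 2 - a ^ 2 = (ξ - a) * (ξ + a) := by ring
        rw [h]; exact mul_ne_zero hne1 hne2
      simp only [smul_eq_mul, hasq, sub_neg_eq_add, sub_zero]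
      field_simp
      ring
    rw [circleIntegral.integral_congr zero_le_one heq]
    rw [circleIntegral.integral_sub int1 intsub,
        circleIntegral.integral_sub int0 int2,
        circleIntegral.integral_smul, circleIntegral.integral_smul, I1, I2, I0]
    have hpi : (2 * (Real.pi : ℂ) * Complex.I) ≠ 0 := by
      simp [Real.pi_ne_zero, Complex.I_ne_zero]
    field_simp [smul_eq_mul]
    ring
  -- limit of the closed form
  have hlim : Tendsto (fun r : ℝ => 2⁻¹ * g ((r:ℂ)⁻¹) + 2⁻¹ * g (-(r:ℂ)⁻¹) - g 0)
      (nhdsWithin (1 : ℝ) (Set.Ioi 1))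
      (nhds (2⁻¹ * g 1 + 2⁻¹ * g (-1) - g 0)) := by
    apply Tendsto.mono_left _ nhdsWithin_le_nhds
    have hc' : Tendsto (fun r : ℝ => ((r:ℂ))⁻¹) (nhds 1) (nhds 1) := by
      have h : Tendsto (fun r : ℝ => (r:ℂ)) (nhds 1) (nhds 1) := by
        exact Complex.continuous_ofReal.tendsto' 1 1 (by simp)
      simpa using h.inv₀ (by norm_num)
    have hlog : ∀ w : ℂ, 0 < ((s2:ℂ) + (s1:ℂ) * w).re → ContinuousAt g w := by
      intro w hw
      exact ContinuousAt.clog (by fun_prop) (Or.inl hw)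
    have hg1 : ContinuousAt g 1 := hlog 1 (by simp; linarith)
    have hg2 : ContinuousAt g (-1) := by
      apply hlog (-1); simp; linarith
    have t1 : Tendsto (fun r : ℝ => g ((r:ℂ)⁻¹)) (nhds 1) (nhds (g 1)) :=
      hg1.tendsto.comp hc'
    have t2 : Tendsto (fun r : ℝ => g (-(r:ℂ)⁻¹)) (nhds 1) (nhds (g (-1))) := by
      have := hg2.tendsto.comp hc'.neg
      exact this
    exact ((t1.const_mul _).add (t2.const_mul _)).sub tendsto_const_nhds
  -- final value
  have hval : 2⁻¹ * g 1 + 2⁻¹ * g (-1) - g 0 = ((Real.log (1 - c1 / c2) / 2 : ℝ) : ℂ) := by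
    have e1 : g 1 = ((Real.log (s2 + s1) : ℝ) : ℂ) := by
      rw [hgdef]
      simp only [mul_one]
      rw [show (s2:ℂ) + (s1:ℂ) = ((s2 + s1 : ℝ) : ℂ) by push_cast; ring]
      rw [Complex.ofReal_log (by positivity)]
    have e2 : g (-1) = ((Real.log (s2 - s1) : ℝ) : ℂ) := by
      rw [hgdef]
      simp only [mul_neg_one]
      rw [show (s2:ℂ) + -(s1:ℂ) = ((s2 - s1 : ℝ) : ℂ) by push_cast; ring]
      rw [Complex.ofReal_log (by linarith)]
    have e0 : g 0 = ((Real.log s2 : ℝ) : ℂ) := by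
      rw [hgdef]; simp only [mul_zero, add_zero]
      rw [Complex.ofReal_log hs2.le]
    rw [e1, e2, e0]
    have hreal : 2⁻¹ * Real.log (s2 + s1) + 2⁻¹ * Real.log (s2 - s1) - Real.log s2
        = Real.log (1 - c1 / c2) / 2 := by
      have hmul : (s2 + s1) * (s2 - s1) = c2 - c1 := by
        have h1' : s1 ^ 2 = c1 := Real.sq_sqrt h1.le
        have h2' : s2 ^ 2 = c2 := Real.sq_sqrt h2.le
        nlinarith
      have hadd : Real.log (s2 + s1) + Real.log (s2 - s1) = Real.log (c2 - c1) := by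
        rw [← hmul, Real.log_mul (by positivity) (by linarith)]
      have hs2l : Real.log s2 = Real.log c2 / 2 := by
        rw [hs2def, Real.log_sqrt h2.le]
      have hdiv : (1 : ℝ) - c1 / c2 = (c2 - c1) / c2 := by field_simp
      rw [hdiv, Real.log_div (by linarith) (by linarith)]
      linarith
    rw [← hreal]; push_cast; ring
  rw [← hval]
  exact hlim.congr' (eventuallyEq_nhdsWithin_of_eqOn fun r hr => (key r hr).symm)
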